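/- For a ∈ G, the binomial X^{lift(a)} − 1 belongs to the ideal I₁(L) generated by {X^{lift(c)} − 1 : c ∈ L} ∪ {X_i^{g i} − 1 : i ∈ Fin n} in MvPolynomial (Fin n) (ZMod 2) if and only if a ∈ L. -/

import Mathlib

open MvPolynomial

/-- For `a ∈ G`, the binomial `X^(lift a) - 1` belongs to the ideal
`I₁(L)` generated by `{X^(lift c) - 1 : c ∈ L} ∪ {X i ^ g i - 1 : i}` in
`MvPolynomial (Fin n) (ZMod 2)` is and only if `a ∈ L`. -/
theorem stmt_8 (n : ℕ) (g : Fin n → ℕ) (hg : ∀ i, 1 ≤ g i)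
    (L : AddSubgroup (∀ i, ZMod (g i)))
    (a : ∀ i, ZMod (g i)) :
    (monomial (Finsupp.equivFunOnFinite.symm fun i => (a i).val) (1 : ZMod 2) - 1 ∈
      Ideal.span
        ({ p : MvPolynomial (Fin n) (ZMod 2) |
            ∃ c ∈ L, p = monomial
              (Finsupp.equivFunOnFinite.symm fun i => (c i).val) (1 : ZMod 2) - 1 } ∪
         { p : MvPolynomial (Fin n) (ZMod 2) |
            ∃ i : Fin n, p = X i ^ g i - 1 })) ↔ a ∈ L := by
  haveI : ∀ i, NeZero (g i) := fun i => ⟨by have := hg i; omega⟩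
  constructor
  · intro h
    -- map to the group algebra of the quotient group
    set Q := (∀ i, ZMod (g i)) ⧸ L
    set q : (∀ i, ZMod (g i)) →+ Q := QuotientAddGroup.mk' L with hq
    set φ : MvPolynomial (Fin n) (ZMod 2) →ₐ[ZMod 2] AddMonoidAlgebra (ZMod 2) Q :=
      aeval (fun i => AddMonoidAlgebra.single (q (Pi.single i 1)) (1 : ZMod 2)) with hφ
    have key : ∀ d : Fin n →₀ ℕ,
        φ (monomial d 1) =
          AddMonoidAlgebra.single (q fun j => ((d j : ℕ) : ZMod (g j))) 1 := by
      intro d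
      have h1 : φ (monomial d 1) =
          ∏ i, AddMonoidAlgebra.single ((d i) • q (Pi.single i 1)) (1 : ZMod 2) := by
        rw [hφ, aeval_monomial, map_one, one_mul]
        rw [Finsupp.prod_fintype]
        · exact Finset.prod_congr rfl fun i _ => by
            rw [AddMonoidAlgebra.single_pow, one_pow]
        · intro i; exact pow_zero _
      rw [h1, AddMonoidAlgebra.prod_single, Finset.prod_const_one]
      congr 1
      have : ∑ i, (d i) • q (Pi.single i 1) = q (∑ i, (d i) • Pi.single i 1) := by
        rw [map_sum]
        exact Finset.sum_congr rfl fun i _ => (map_nsmul q _ _).symm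
      rw [this]
      congr 1
      funext j
      simp only [Finset.sum_apply, Pi.smul_apply, Pi.single_apply]
      rw [Finset.sum_eq_single j]
      · simp [nsmul_eq_mul]
      · intro i _ hij; simp [hij]
      · intro hj; exact absurd (Finset.mem_univ j) hj
    have hker : ∀ p ∈ ({ p : MvPolynomial (Fin n) (ZMod 2) |
            ∃ c ∈ L, p = monomial
              (Finsupp.equivFunOnFinite.symm fun i => (c i).val) (1 : ZMod 2) - 1 } ∪
         { p : MvPolynomial (Fin n) (ZMod 2) |
            ∃ i : Fin n, p = X i ^ g i - 1 }), φ p = 0 := by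
      rintro p (⟨c, hc, rfl⟩ | ⟨i, rfl⟩)
      · rw [map_sub, key, map_one]
        have : (fun j => (((Finsupp.equivFunOnFinite.symm fun i => (c i).val) j : ℕ) :
            ZMod (g j))) = c := by
          funext j
          simp [ZMod.natCast_val, ZMod.cast_id]
        rw [this]
        have hc0 : q c = 0 := (QuotientAddGroup.eq_zero_iff c).mpr hc
        rw [hc0, sub_eq_zero]
        rfl
      · have : (X i ^ g i : MvPolynomial (Fin n) (ZMod 2)) =
            monomial (Finsupp.single i (g i)) 1 := by
          rw [X_pow_eq_monomial]
        rw [map_sub, this, key, map_one]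
        have : (fun j => (((Finsupp.single i (g i)) j : ℕ) : ZMod (g j))) =
            (0 : ∀ j, ZMod (g j)) := by
          funext j
          rcases eq_or_ne i j with rfl | hij
          · simp [ZMod.natCast_self]
          · simp [Finsupp.single_apply, hij]
        rw [this, map_zero, sub_eq_zero]
        rfl
    have hspan : Ideal.span _ ≤ RingHom.ker φ.toRingHom := Ideal.span_le.mpr hker
    have h0 : φ (monomial (Finsupp.equivFunOnFinite.symm fun i => (a i).val) (1 : ZMod 2)
        - 1) = 0 := hspan h
    rw [map_sub, key, map_one, sub_eq_zero] at h0
    have ha : (fun j => (((Finsupp.equivFunOnFinite.symm fun i => (a i).val) j : ℕ) :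
        ZMod (g j))) = a := by
      funext j
      simp [ZMod.natCast_val, ZMod.cast_id]
    rw [ha] at h0
    have h1 : (1 : AddMonoidAlgebra (ZMod 2) Q) = AddMonoidAlgebra.single 0 1 := rfl
    rw [h1] at h0
    rcases AddMonoidAlgebra.single_inj.mp h0 with ⟨hq0, -⟩ | ⟨h10, -⟩
    · exact (QuotientAddGroup.eq_zero_iff a).mp hq0
    · exact absurd h10 one_ne_zero
  · intro ha
    exact Ideal.subset_span (Or.inl ⟨a, ha, rfl⟩)
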